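/- Let G be a finite group with a chain of subgroups H_1 < H_2 < ⋯ < H_k = G where k ≥ 3. For i = 2, …, k−1, let T_i be a right transversal of H_{i-1} in H_i and let h_i ∈ H_{i+1} \ H_i be an element normalizing H_i. Set A_1 = H_1 and A_i = T_i h_i for i = 2, …, k−1. Let A_k be a right transversal of H_{k-1} in G such that the unique element t' of A_k ∩ H_{k-1} satisfies t' ∈ H_2 \ H_1, and the unique element s' of A_k ∩ H_{k-1} h_{k-1} satisfies s' ∉ A_{k-1}. Then A_k is disjoint from A_i for every i = 1, 2, …, k−1. -/

import Mathlib

open Pointwise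

/-- `T` is a right transversal of `H` in `K` (for subgroups `H ≤ K` of `G`): `T ⊆ K` and every
right coset of `H` meeting `K` contains exactly one element of `T`; equivalently, for each
`g ∈ K` there is a unique `t ∈ T` with `g * t⁻¹ ∈ H`, i.e. lying in the same right coset. -/
def IsRightTransversal {G : Type*} [Group G] (H K : Subgroup G) (T : Set G) : Prop :=
  T ⊆ (K : Set G) ∧ ∀ g ∈ K, ∃! t, t ∈ T ∧ g * t⁻¹ ∈ H

/-- Let `G` be a finite group with a chain of subgroups `H_1 < H_2 < ⋯ < H_k = G`, `k ≥ 3`.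
For `i = 2, …, k-1`, let `T_i` be a right transversal of `H_{i-1}` in `H_i` and let
`h_i ∈ H_{i+1} \ H_i` normalize `H_i`.  Set `A_1 = H_1` and `A_i = T_i h_i` for
`i = 2, …, k-1`.  Let `A_k` be a right transversal of `H_{k-1}` in `G` such that the unique
element `t'` of `A_k ∩ H_{k-1}` satisfies `t' ∈ H_2 \ H_1` and the unique element `s'` of
`A_k ∩ H_{k-1} h_{k-1}` satisfies `s' ∉ A_{k-1}`.  Then `A_k` is disjoint from each of
`A_1, …, A_{k-1}`. -/
theorem last_factor_disjoint {G : Type*} [Group G] [Finite G]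
    {k : ℕ} (hk : 3 ≤ k) (H : ℕ → Subgroup G) (T : ℕ → Set G) (h : ℕ → G)
    (A : ℕ → Set G) (Ak : Set G) (t' s' : G)
    (hchain : ∀ i, 1 ≤ i → i < k → H i < H (i + 1))
    (hHk : H k = ⊤)
    (hT : ∀ i, 2 ≤ i → i ≤ k - 1 → IsRightTransversal (H (i - 1)) (H i) (T i))
    (hh : ∀ i, 2 ≤ i → i ≤ k - 1 →
      h i ∈ H (i + 1) ∧ h i ∉ H i ∧ h i ∈ Subgroup.normalizer (H i : Set G))
    (hA1 : A 1 = (H 1 : Set G))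
    (hA : ∀ i, 2 ≤ i → i ≤ k - 1 → A i = T i * ({h i} : Set G))
    (hAk : IsRightTransversal (H (k - 1)) ⊤ Ak)
    (ht' : Ak ∩ (H (k - 1) : Set G) = {t'}) (ht'2 : t' ∈ H 2) (ht'1 : t' ∉ H 1)
    (hs' : Ak ∩ ((H (k - 1) : Set G) * ({h (k - 1)} : Set G)) = {s'})
    (hs'A : s' ∉ A (k - 1)) :
    ∀ i, 1 ≤ i → i ≤ k - 1 → Disjoint (A i) Ak := by
  have Hmono : ∀ j, j ≤ k → ∀ i, 1 ≤ i → i ≤ j → H i ≤ H j := by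
    intro j
    induction j with
    | zero => intro _ i hi hij; omega
    | succ j ih =>
      intro hjk i hi hij
      rcases Nat.eq_or_lt_of_le hij with heq | hlt
      · rw [heq]
      · exact (ih (by omega) i hi (by omega)).trans (hchain j (by omega) (by omega)).le
  intro i hi hik
  rw [Set.disjoint_left]
  intro x hxA hxAk
  rcases eq_or_ne i 1 with rfl | hi1
  · rw [hA1] at hxA
    have hx : x ∈ (H (k - 1) : Set G) :=
      Hmono (k - 1) (by omega) 1 le_rfl (by omega) hxA
    have hmem : x ∈ Ak ∩ (H (k - 1) : Set G) := ⟨hxAk, hx⟩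
    rw [ht', Set.mem_singleton_iff] at hmem
    subst hmem
    exact ht'1 hxA
  · have hi2 : 2 ≤ i := by omega
    rw [hA i hi2 hik] at hxA
    obtain ⟨t, ht, b, hb, rfl⟩ := hxA
    rw [Set.mem_singleton_iff] at hb
    subst hb
    have htHi : t ∈ H i := (hT i hi2 hik).1 ht
    rcases eq_or_ne i (k - 1) with heq | hne
    · subst heq
      have hx : t * h (k - 1) ∈ Ak ∩ ((H (k - 1) : Set G) * ({h (k - 1)} : Set G)) :=
        ⟨hxAk, Set.mul_mem_mul htHi rfl⟩
      rw [hs', Set.mem_singleton_iff] at hx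
      apply hs'A
      rw [← hx, hA (k - 1) hi2 le_rfl]
      exact Set.mul_mem_mul ht rfl
    · have hxH : t * h i ∈ H (k - 1) := by
        have h1 : t * h i ∈ H (i + 1) :=
          mul_mem ((hchain i (by omega) (by omega)).le htHi) (hh i hi2 hik).1
        exact Hmono (k - 1) (by omega) (i + 1) (by omega) (by omega) h1
      have hmem : t * h i ∈ Ak ∩ (H (k - 1) : Set G) := ⟨hxAk, hxH⟩
      rw [ht', Set.mem_singleton_iff] at hmem
      have ht'Hi : t' ∈ H i := Hmono i (by omega) 2 (by omega) hi2 ht'2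
      rw [← hmem] at ht'Hi
      have : h i ∈ H i := by simpa using mul_mem (inv_mem htHi) ht'Hi
      exact (hh i hi2 hik).2.1 this
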